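/- With notation as in the context, the following hold: P̂(0) = 1 and P̂(x) > 0 for all x ∈ (0, (m+1)/2]; Q̂(0) = 1, Q̂((m+1)/2) = 0, Q̂'((m+1)/2) < 0, and Q̂(x) > 0 for all x ∈ (0, (m+1)/2). -/

import Mathlib

open Polynomial Set

private lemma poly_eq_of_eval_eq_of_ne_zero {p q : Polynomial ℝ}
    (h : ∀ x : ℝ, x ≠ 0 → p.eval x = q.eval x) : p = q :=
  Polynomial.eq_of_infinite_eval_eq p q <|
    (Set.Ioi_infinite (0:ℝ)).mono fun x hx => h x (ne_of_gt hx)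

/-- sign properties of P̂ and Q̂ on (0, (m+1)/2]. -/
theorem stmt_5 (m : ℕ) (hm : 2 ≤ m)
    (lam : Fin (m - 1) → ℝ) (hmono : Monotone lam) (hlt : ∀ i, lam i < 1)
    (P Q Phat Qhat : Polynomial ℝ)
    (hP : P = ∏ i : Fin (m - 1), (X - C (2 * lam i / ((m : ℝ) + 1))))
    (hQder : ∀ y : ℝ, (derivative Q).eval y = ((m : ℝ) + 1) * y * P.eval y)
    (hQval : Q.eval (2 / ((m : ℝ) + 1)) = 0)
    (hPhat : ∀ x : ℝ, x ≠ 0 → Phat.eval x = x ^ (m - 1) * P.eval (1 / x))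
    (hQhat : ∀ x : ℝ, x ≠ 0 → Qhat.eval x = x ^ (m + 1) * Q.eval (1 / x)) :
    Phat.eval 0 = 1 ∧
    (∀ x ∈ Ioc (0 : ℝ) (((m : ℝ) + 1) / 2), 0 < Phat.eval x) ∧
    Qhat.eval 0 = 1 ∧
    Qhat.eval (((m : ℝ) + 1) / 2) = 0 ∧
    (derivative Qhat).eval (((m : ℝ) + 1) / 2) < 0 ∧
    (∀ x ∈ Ioo (0 : ℝ) (((m : ℝ) + 1) / 2), 0 < Qhat.eval x) := by
  obtain ⟨k, rfl⟩ : ∃ k, m = k + 2 := ⟨m - 2, by omega⟩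
  set M : ℝ := ((k + 2 : ℕ) : ℝ) + 1 with hMdef
  have hMpos : (0:ℝ) < M := by rw [hMdef]; positivity
  -- P facts
  have hPmonic : P.Monic := by
    rw [hP]; exact monic_prod_of_monic _ _ fun i _ => monic_X_sub_C _
  have hPdeg : P.natDegree = k + 1 := by
    rw [hP, natDegree_prod_of_monic _ _ fun i _ => monic_X_sub_C _]
    simp [natDegree_X_sub_C]
  have Ppos : ∀ y : ℝ, 2 / M ≤ y → 0 < P.eval y := by
    intro y hy
    rw [hP, eval_prod]
    apply Finset.prod_pos
    intro i _
    simp only [eval_sub, eval_X, eval_C]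
    have h1 : 2 * lam i / M < 2 / M := by
      rw [div_lt_div_iff₀ hMpos hMpos]
      nlinarith [hlt i]
    linarith
  -- derivative identity
  have hD : derivative Q = C M * (X * P) := by
    apply Polynomial.funext
    intro y
    rw [hQder y]
    simp only [eval_mul, eval_C, eval_X]
    ring
  have hQtop : Q.coeff (k + 3) = 1 := by
    have h1 := Polynomial.coeff_derivative Q (k + 2)
    rw [hD, coeff_C_mul] at h1
    have e1 : (X * P).coeff (k + 2) = P.coeff (k + 1) := Polynomial.coeff_X_mul P (k + 1)
    have e2 : P.coeff (k + 1) = 1 := by rw [← hPdeg]; exact hPmonic.coeff_natDegree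
    rw [e1, e2, mul_one] at h1
    have e3 : Q.coeff (k + 2 + 1) = Q.coeff (k + 3) := rfl
    have e4 : (((k + 2 : ℕ) : ℝ) + 1) = M := hMdef.symm
    rw [e3, e4] at h1
    have h5 : Q.coeff (k + 3) * M = 1 * M := by rw [one_mul]; exact h1.symm
    exact mul_right_cancel₀ (ne_of_gt hMpos) h5
  have hQhigh : Q.natDegree ≤ k + 3 := by
    rw [natDegree_le_iff_coeff_eq_zero]
    intro N hN
    obtain ⟨j, rfl⟩ : ∃ j, N = j + (k + 3) + 1 := ⟨N - (k + 4), by omega⟩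
    have h1 := Polynomial.coeff_derivative Q (j + (k + 3))
    rw [hD] at h1
    have hb : (C M * (X * P)).natDegree ≤ k + 2 := by
      refine natDegree_mul_le.trans ?_
      refine le_trans (Nat.add_le_add_left natDegree_mul_le _) ?_
      rw [natDegree_C, natDegree_X, hPdeg]
      omega
    have h2 : (C M * (X * P)).coeff (j + (k + 3)) = 0 :=
      coeff_eq_zero_of_natDegree_lt (hb.trans_lt (by omega))
    rw [h2] at h1
    have hc : ((j + (k + 3) : ℕ) : ℝ) + 1 ≠ 0 := by positivity
    rcases mul_eq_zero.mp h1.symm with h | h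
    · exact h
    · exact absurd h hc
  -- Phat as a polynomial
  have hPhat_poly : Phat = ∏ i : Fin (k + 2 - 1), (1 - C (2 * lam i / M) * X) := by
    apply poly_eq_of_eval_eq_of_ne_zero
    intro x hx
    rw [hPhat x hx, hP, eval_prod, eval_prod]
    have hcard : (Finset.univ : Finset (Fin (k + 2 - 1))).card = k + 2 - 1 := by simp
    have hxpow : x ^ (k + 2 - 1) = ∏ _i : Fin (k + 2 - 1), x := by
      rw [Finset.prod_const, hcard]
    rw [hxpow, ← Finset.prod_mul_distrib]
    apply Finset.prod_congr rfl
    intro i _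
    simp only [eval_sub, eval_X, eval_C, eval_one, eval_mul]
    field_simp
  have hPhat0 : Phat.eval 0 = 1 := by
    rw [hPhat_poly, eval_prod]
    simp
  have hPhatpos : ∀ x ∈ Set.Ioc (0:ℝ) (M / 2), 0 < Phat.eval x := by
    intro x hx
    rw [hPhat_poly, eval_prod]
    apply Finset.prod_pos
    intro i _
    simp only [eval_sub, eval_one, eval_mul, eval_C, eval_X]
    have h1 : 2 * lam i * x < M := by
      nlinarith [hlt i, hx.1, hx.2, mul_pos (sub_pos.mpr (hlt i)) hx.1]
    have h2 : 2 * lam i / M * x < 1 := by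
      rw [div_mul_eq_mul_div, div_lt_one hMpos]; exact h1
    linarith
  -- Qhat as a polynomial
  have hQhat_poly : Qhat = ∑ j ∈ Finset.range (k + 4), C (Q.coeff j) * X ^ (k + 3 - j) := by
    apply poly_eq_of_eval_eq_of_ne_zero
    intro x hx
    rw [hQhat x hx, eval_eq_sum_range' (lt_of_le_of_lt hQhigh (Nat.lt_succ_self (k + 3))) (1 / x),
      Finset.mul_sum, eval_finset_sum]
    apply Finset.sum_congr rfl
    intro j hj
    simp only [Finset.mem_range] at hj
    rw [eval_mul, eval_C, eval_pow, eval_X]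
    have hj' : j ≤ k + 3 := by omega
    rw [pow_sub₀ x hx hj', one_div, inv_pow]
    ring
  have hQhat0 : Qhat.eval 0 = 1 := by
    rw [hQhat_poly, eval_finset_sum]
    rw [Finset.sum_eq_single (k + 3)]
    · simp [hQtop]
    · intro j hj hne
      simp only [Finset.mem_range] at hj
      have hz : k + 3 - j ≠ 0 := by omega
      simp [zero_pow hz]
    · intro h
      exact absurd (Finset.mem_range.mpr (by omega)) h
  -- Q positive beyond 2/M
  have hQmono : StrictMonoOn (fun y => Q.eval y) (Set.Ici (2 / M)) := by
    apply strictMonoOn_of_deriv_pos (convex_Ici _)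
    · exact (Polynomial.continuous Q).continuousOn
    · intro y hy
      rw [interior_Ici] at hy
      rw [Polynomial.deriv, hQder]
      have h0 : (0:ℝ) < 2 / M := by positivity
      have hy0 : 0 < y := lt_trans h0 hy
      exact mul_pos (mul_pos hMpos hy0) (Ppos y (le_of_lt hy))
  have hQpos : ∀ y : ℝ, 2 / M < y → 0 < Q.eval y := by
    intro y hy
    have h0 : (0:ℝ) < 2 / M := by positivity
    have := hQmono (Set.self_mem_Ici) (le_of_lt hy) hy
    simpa only [hQval] using this
  -- facts about x0 = M/2
  have hx0pos : (0:ℝ) < M / 2 := by positivity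
  have hx0ne : (M / 2 : ℝ) ≠ 0 := ne_of_gt hx0pos
  have hinv : (1:ℝ) / (M / 2) = 2 / M := one_div_div _ _
  have hQhatx0 : Qhat.eval (M / 2) = 0 := by
    rw [hQhat _ hx0ne, hinv, hQval, mul_zero]
  -- derivative of Qhat at M/2
  have hDQ : (derivative Qhat).eval (M / 2) < 0 := by
    have h1 : HasDerivAt (fun x : ℝ => x ^ (k + 2 + 1))
        (((k + 2 + 1 : ℕ) : ℝ) * (M / 2) ^ (k + 2)) (M / 2) := hasDerivAt_pow _ _
    have h2 : HasDerivAt (fun x : ℝ => Q.eval x⁻¹)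
        (eval ((M / 2 : ℝ))⁻¹ (derivative Q) * (-(((M / 2 : ℝ)) ^ 2)⁻¹)) (M / 2) :=
      (Q.hasDerivAt _).comp _ (hasDerivAt_inv hx0ne)
    have hg := h1.mul h2
    have hEq : (fun x : ℝ => Qhat.eval x) =ᶠ[nhds (M / 2)]
        (fun x : ℝ => x ^ (k + 2 + 1) * Q.eval x⁻¹) := by
      filter_upwards [eventually_ne_nhds hx0ne] with x hx
      rw [hQhat x hx, one_div]
    have hQD := hg.congr_of_eventuallyEq hEq
    have huniq := (Qhat.hasDerivAt (M / 2)).unique hQD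
    rw [huniq]
    have hinv2 : ((M / 2 : ℝ))⁻¹ = 2 / M := by rw [inv_div]
    rw [hinv2, hQval, mul_zero, zero_add, hQder]
    have hP2 : 0 < P.eval (2 / M) := Ppos _ le_rfl
    have hpowpos : (0:ℝ) < (M / 2) ^ (k + 2 + 1) := pow_pos hx0pos _
    have hsq : (0:ℝ) < ((M / 2 : ℝ) ^ 2)⁻¹ := by positivity
    apply mul_neg_of_pos_of_neg hpowpos
    apply mul_neg_of_pos_of_neg
    · exact mul_pos (mul_pos hMpos (by positivity)) hP2
    · exact neg_lt_zero.mpr hsq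
  refine ⟨hPhat0, hPhatpos, hQhat0, hQhatx0, hDQ, ?_⟩
  intro x hx
  rw [hQhat x (ne_of_gt hx.1)]
  apply mul_pos (pow_pos hx.1 _)
  apply hQpos
  rw [div_lt_div_iff₀ hMpos hx.1]
  nlinarith [hx.2]
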